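/- Let f: X → X be a bi-asymptotically c-expansive continuous surjection of a compact metric space with the shadowing property. Then there exists δ > 0 such that for all p, y ∈ X with d(p,y) < δ and all full orbits (pₙ),(yₙ) ∈ X_f with p₀ = p, y₀ = y, one has W^u((pₙ)) ∩ W^s(y) ≠ ∅ and W^u((yₙ)) ∩ W^s(p) ≠ ∅. -/
import Mathlib


open Filter Topology Function

/-- A full orbit (element of the inverse limit) of `f`. -/
def FullOrbit {X : Type*} (f : X → X) (x : ℤ → X) : Prop := ∀ n : ℤ, f (x n) = x (n + 1)

/-- `f` is bi-asymptotically `c`-expansive with constant `c`. -/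
def BiAsympCExpWith {X : Type*} [MetricSpace X] (f : X → X) (c : ℝ) : Prop :=
  (∀ x y : ℤ → X, FullOrbit f x → FullOrbit f y →
      (∀ n : ℕ, dist (x n) (y n) ≤ c) →
      Tendsto (fun n : ℕ => dist (x n) (y n)) atTop (𝓝 0)) ∧
  (∀ x y : ℤ → X, FullOrbit f x → FullOrbit f y →
      (∀ n : ℕ, dist (x (-(n : ℤ))) (y (-(n : ℤ))) ≤ c) →
      Tendsto (fun n : ℕ => dist (x (-(n : ℤ))) (y (-(n : ℤ)))) atTop (𝓝 0))

/-- `f` is bi-asymptotically `c`-expansive (for some constant). -/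
def BiAsympCExpansive {X : Type*} [MetricSpace X] (f : X → X) : Prop :=
  ∃ c > 0, BiAsympCExpWith f c

/-- `f` has the shadowing property. -/
def Shadowing {X : Type*} [MetricSpace X] (f : X → X) : Prop :=
  ∀ ε > 0, ∃ δ > 0, ∀ x : ℕ → X, (∀ n : ℕ, dist (f (x n)) (x (n + 1)) ≤ δ) →
    ∃ y : X, ∀ n : ℕ, dist (f^[n] y) (x n) ≤ ε

/-- `x` is a non-wandering point of `f`. -/
def NonWandering {X : Type*} [TopologicalSpace X] (f : X → X) (x : X) : Prop :=
  ∀ U : Set X, IsOpen U → x ∈ U → ∃ n : ℕ, 0 < n ∧ (f^[n] '' U ∩ U).Nonempty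

/-- There is a finite `α`-chain from `x` to `y`. -/
def ChainRel {X : Type*} [MetricSpace X] (f : X → X) (α : ℝ) (x y : X) : Prop :=
  ∃ (n : ℕ) (z : ℕ → X), 0 < n ∧ z 0 = x ∧ z n = y ∧
    ∀ i < n, dist (f (z i)) (z (i + 1)) ≤ α

/-- `x` is a chain recurrent point of `f`. -/
def ChainRecurrent {X : Type*} [MetricSpace X] (f : X → X) (x : X) : Prop :=
  ∀ α > 0, ChainRel f α x x

/-- chain equivalence of chain recurrent points -/
def ChainEquiv {X : Type*} [MetricSpace X] (f : X → X) (x y : X) : Prop :=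
  ∀ α > 0, ChainRel f α x y ∧ ChainRel f α y x

/-- basic sets: chain equivalence classes of `CR(f)` -/
def IsBasicSet {X : Type*} [MetricSpace X] (f : X → X) (B : Set X) : Prop :=
  ∃ x : X, ChainRecurrent f x ∧ B = {y | ChainRecurrent f y ∧ ChainEquiv f x y}

/-- the stable set of `x`. -/
def Ws {X : Type*} [MetricSpace X] (f : X → X) (x : X) : Set X :=
  {y | Tendsto (fun n : ℕ => dist (f^[n] x) (f^[n] y)) atTop (𝓝 0)}

/-- the unstable set of a full orbit `x`. -/
def Wu {X : Type*} [MetricSpace X] (f : X → X) (x : ℤ → X) : Set X :=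
  {y₀ | ∃ y : ℤ → X, FullOrbit f y ∧ y 0 = y₀ ∧
    Tendsto (fun n : ℕ => dist (x (-(n : ℤ))) (y (-(n : ℤ)))) atTop (𝓝 0)}

/-- `g` restricted to `A` is topologically transitive. -/
def TopTransOn {X : Type*} [TopologicalSpace X] (g : X → X) (A : Set X) : Prop :=
  ∀ U V : Set X, IsOpen U → IsOpen V → (U ∩ A).Nonempty → (V ∩ A).Nonempty →
    ∃ n : ℕ, 0 < n ∧ (g^[n] '' (U ∩ A) ∩ (V ∩ A)).Nonempty

/-- `g` restricted to `A` is topologically mixing. -/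
def TopMixingOn {X : Type*} [TopologicalSpace X] (g : X → X) (A : Set X) : Prop :=
  ∀ U V : Set X, IsOpen U → IsOpen V → (U ∩ A).Nonempty → (V ∩ A).Nonempty →
    ∃ N : ℕ, ∀ n ≥ N, (g^[n] '' (U ∩ A) ∩ (V ∩ A)).Nonempty

/-- `g` is asymptotically expansive with constant `c`. -/
def AsympExpWith {X : Type*} [MetricSpace X] (g : X → X) (c : ℝ) : Prop :=
  ∀ x y : X, (∀ n : ℕ, dist (g^[n] x) (g^[n] y) ≤ c) →
    Tendsto (fun n : ℕ => dist (g^[n] x) (g^[n] y)) atTop (𝓝 0)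

lemma fullOrbit_iterate {X : Type*} {f : X → X} {x : ℤ → X} (h : FullOrbit f x) :
    ∀ n : ℕ, x (n : ℤ) = f^[n] (x 0) := by
  intro n
  induction n with
  | zero => simp
  | succ n ih =>
    rw [show ((n + 1 : ℕ) : ℤ) = (n : ℤ) + 1 by push_cast; ring, ← h,
      Function.iterate_succ_apply', ih]

lemma bi_shadowing {X : Type*} [MetricSpace X] [CompactSpace X] {f : X → X}
    (hf : Continuous f) (hsh : Shadowing f) :
    ∀ ε > (0:ℝ), ∃ δ > (0:ℝ), ∀ z : ℤ → X,
      (∀ n : ℤ, dist (f (z n)) (z (n + 1)) ≤ δ) →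
      ∃ w : ℤ → X, FullOrbit f w ∧ ∀ n : ℤ, dist (w n) (z n) ≤ ε := by
  intro ε hε
  obtain ⟨δ, hδ, hδsh⟩ := hsh ε hε
  refine ⟨δ, hδ, fun z hz => ?_⟩
  -- for each k, shadow the pseudo-orbit shifted by k
  have hex : ∀ k : ℕ, ∃ y : X, ∀ n : ℕ, dist (f^[n] y) (z ((n : ℤ) - (k : ℤ))) ≤ ε := by
    intro k
    apply hδsh
    intro n
    have := hz ((n : ℤ) - (k : ℤ))
    have he : ((n : ℤ) - (k : ℤ)) + 1 = ((n + 1 : ℕ) : ℤ) - (k : ℤ) := by push_cast; ring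
    rwa [he] at this
  choose y hy using hex
  set a : ℕ → ℤ → X := fun k m => f^[(m + (k : ℤ)).toNat] (y k) with ha
  have P1 : ∀ (k : ℕ) (m : ℤ), -(k : ℤ) ≤ m → dist (a k m) (z m) ≤ ε := by
    intro k m hm
    have h1 : (((m + (k:ℤ)).toNat : ℤ)) = m + k := by omega
    have := hy k (m + (k:ℤ)).toNat
    rw [h1] at this
    simpa using this
  have P2 : ∀ (k : ℕ) (m : ℤ), -(k : ℤ) ≤ m → f (a k m) = a k (m + 1) := by
    intro k m hm
    have h1 : (m + 1 + (k:ℤ)).toNat = (m + (k:ℤ)).toNat + 1 := by omega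
    simp only [ha, h1, Function.iterate_succ_apply']
  set U : Ultrafilter ℕ := Ultrafilter.of atTop with hUdef
  have hU : (U : Filter ℕ) ≤ atTop := Ultrafilter.of_le _
  have hconv : ∀ m : ℤ, ∃ x : X, Tendsto (fun k => a k m) (U : Filter ℕ) (𝓝 x) := by
    intro m
    obtain ⟨x, -, hx⟩ := isCompact_univ.ultrafilter_le_nhds (U.map fun k => a k m)
      (by simp)
    exact ⟨x, hx⟩
  choose w hw using hconv
  have hev : ∀ m : ℤ, ∀ᶠ k : ℕ in (U : Filter ℕ), -(k : ℤ) ≤ m := by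
    intro m
    apply hU
    filter_upwards [eventually_ge_atTop (-m).toNat] with k hk
    omega
  refine ⟨w, ?_, ?_⟩
  · intro m
    have h1 : Tendsto (fun k => f (a k m)) (U : Filter ℕ) (𝓝 (f (w m))) :=
      (hf.tendsto _).comp (hw m)
    have h2 : Tendsto (fun k => a k (m + 1)) (U : Filter ℕ) (𝓝 (f (w m))) := by
      apply h1.congr'
      filter_upwards [hev m] with k hk using P2 k m hk
    exact tendsto_nhds_unique h2 (hw (m + 1))
  · intro m
    have h1 : Tendsto (fun k => dist (a k m) (z m)) (U : Filter ℕ) (𝓝 (dist (w m) (z m))) :=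
      (hw m).dist tendsto_const_nhds
    apply le_of_tendsto h1
    filter_upwards [hev m] with k hk using P1 k m hk

lemma one_side {X : Type*} [MetricSpace X] [CompactSpace X] {f : X → X} {c δ₀ : ℝ}
    (hc : 0 < c) (hδ₀ : 0 ≤ δ₀) (hexp : BiAsympCExpWith f c)
    (hbsh : ∀ z : ℤ → X, (∀ n : ℤ, dist (f (z n)) (z (n + 1)) ≤ δ₀) →
      ∃ w : ℤ → X, FullOrbit f w ∧ ∀ n : ℤ, dist (w n) (z n) ≤ c / 2)
    (p y : X) (pseq yseq : ℤ → X) (hp : FullOrbit f pseq) (hy : FullOrbit f yseq)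
    (hp0 : pseq 0 = p) (hy0 : yseq 0 = y) (hd : dist p y < min δ₀ (c / 2)) :
    (Wu f pseq ∩ Ws f y).Nonempty := by
  set z : ℤ → X := fun n => if n < 0 then pseq n else yseq n with hzdef
  have hz : ∀ n : ℤ, dist (f (z n)) (z (n + 1)) ≤ δ₀ := by
    intro n
    rcases lt_trichotomy n (-1) with h | h | h
    · have h1 : n < 0 := by omega
      have h2 : n + 1 < 0 := by omega
      simp [hzdef, h1, h2, hp n, hδ₀]
    · subst h
      simp only [hzdef]
      norm_num
      rw [hp (-1)]
      norm_num [hp0, hy0]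
      exact le_trans hd.le (min_le_left _ _)
    · have h1 : ¬ n < 0 := by omega
      have h2 : ¬ n + 1 < 0 := by omega
      simp [hzdef, h1, h2, hy n, hδ₀]
  obtain ⟨w, hw, hwz⟩ := hbsh z hz
  -- forward: w 0 ∈ Ws f y
  have hfwd : ∀ n : ℕ, dist (w n) (yseq n) ≤ c := by
    intro n
    have h1 : ¬ (n : ℤ) < 0 := by omega
    have := hwz (n : ℤ)
    simp only [hzdef, h1, if_false] at this
    linarith
  have hWs : Tendsto (fun n : ℕ => dist (w (n : ℤ)) (yseq (n : ℤ))) atTop (𝓝 0) :=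
    hexp.1 w yseq hw hy hfwd
  -- backward: w 0 ∈ Wu f pseq
  have hbwd : ∀ n : ℕ, dist (w (-(n : ℤ))) (pseq (-(n : ℤ))) ≤ c := by
    intro n
    rcases Nat.eq_zero_or_pos n with h | h
    · subst h
      have h0 : dist (w 0) (z 0) ≤ c / 2 := hwz 0
      have hz0 : z 0 = y := by simp [hzdef, hy0]
      rw [hz0] at h0
      have hyp : dist y p < c / 2 := by rw [dist_comm]; exact lt_of_lt_of_le hd (min_le_right _ _)
      simp only [Nat.cast_zero, neg_zero]
      calc dist (w 0) (pseq 0) ≤ dist (w 0) y + dist y (pseq 0) := dist_triangle _ _ _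
        _ ≤ c / 2 + c / 2 := by rw [hp0]; exact add_le_add h0 hyp.le
        _ = c := by ring
    · have h1 : (-(n : ℤ)) < 0 := by omega
      have := hwz (-(n : ℤ))
      simp only [hzdef, h1, if_true] at this
      linarith
  have hWu : Tendsto (fun n : ℕ => dist (w (-(n : ℤ))) (pseq (-(n : ℤ)))) atTop (𝓝 0) :=
    hexp.2 w pseq hw hp hbwd
  refine ⟨w 0, ⟨w, hw, rfl, ?_⟩, ?_⟩
  · simpa [dist_comm] using hWu
  · show Tendsto (fun n : ℕ => dist (f^[n] y) (f^[n] (w 0))) atTop (𝓝 0)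
    have heq : ∀ n : ℕ, dist (f^[n] y) (f^[n] (w 0)) = dist (w (n : ℤ)) (yseq (n : ℤ)) := by
      intro n
      rw [← hy0, ← fullOrbit_iterate hy n, ← fullOrbit_iterate hw n, dist_comm]
    simpa only [heq] using hWs

/-- Existence of heteroclinic intersections of local stable and unstable sets for nearby points. -/
theorem wu_inter_ws_nonempty {X : Type*} [MetricSpace X] [CompactSpace X]
    (f : X → X) (hf : Continuous f) (hsurj : Function.Surjective f)
    (hexp : BiAsympCExpansive f) (hsh : Shadowing f) :
    ∃ δ > (0 : ℝ), ∀ (p y : X) (pseq yseq : ℤ → X),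
      FullOrbit f pseq → FullOrbit f yseq → pseq 0 = p → yseq 0 = y → dist p y < δ →
      (Wu f pseq ∩ Ws f y).Nonempty ∧ (Wu f yseq ∩ Ws f p).Nonempty := by
  obtain ⟨c, hc, hexp'⟩ := hexp
  obtain ⟨δ₀, hδ₀, hbsh⟩ := bi_shadowing hf hsh (c / 2) (by linarith)
  refine ⟨min δ₀ (c / 2), by positivity, fun p y pseq yseq hp hy hp0 hy0 hd => ?_⟩
  exact ⟨one_side hc hδ₀.le hexp' hbsh p y pseq yseq hp hy hp0 hy0 hd,
    one_side hc hδ₀.le hexp' hbsh y p yseq pseq hy hp hy0 hp0 (by rwa [dist_comm])⟩
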